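/- Let t ≥ 2, k ≥ 3, p ≥ 1 and ℓ ≥ 1 be integers with ℓ ≤ k−1, and write k−1 = μℓ + α with integers μ ≥ 1 and 0 ≤ α < ℓ. Let U_1, …, U_{t+k} be finite sets with |U_i| = p+1 for every i ∈ {1, …, t+k}, and suppose that |U_{i_1} ∪ U_{i_2} ∪ ⋯ ∪ U_{i_k}| ≥ kp + ℓ + 1 for any k distinct indices i_1, …, i_k ∈ {1, …, t+k}. Then μ·(Σ_{i=1}^{t+k} |U_i| − |U_1 ∪ ⋯ ∪ U_{t+k}|) ≤ (μ−1)(t+k−α) + α·μ²; equivalently, |U_1 ∪ ⋯ ∪ U_{t+k}| ≥ Σ_{i=1}^{t+k} |U_i| − ((μ−1)/μ)(t+k−α) − αμ. -/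

import Mathlib

open Finset

namespace St16

variable {ι : Type*} [DecidableEq ι] {α : Type*} [DecidableEq α]

def dupl (U : ι → Finset α) (S : Finset ι) : ℕ :=
  (∑ i ∈ S, (U i).card) - (S.biUnion U).card

lemma biUnion_union' (U : ι → Finset α) (A B : Finset ι) :
    (A ∪ B).biUnion U = A.biUnion U ∪ B.biUnion U := by
  ext x
  simp only [Finset.mem_biUnion, Finset.mem_union]
  constructor
  · rintro ⟨i, hi | hi, hx⟩
    · exact Or.inl ⟨i, hi, hx⟩
    · exact Or.inr ⟨i, hi, hx⟩
  · rintro (⟨i, hi, hx⟩ | ⟨i, hi, hx⟩)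
    · exact ⟨i, Or.inl hi, hx⟩
    · exact ⟨i, Or.inr hi, hx⟩

lemma dupl_mono (U : ι → Finset α) {S T : Finset ι} (h : S ⊆ T) :
    dupl U S ≤ dupl U T := by
  have hT : S ∪ T \ S = T := union_sdiff_of_subset h
  have h1 : ∑ i ∈ T, (U i).card = (∑ i ∈ S, (U i).card) + ∑ i ∈ T \ S, (U i).card := by
    rw [← Finset.sum_union disjoint_sdiff, hT]
  have hbu : T.biUnion U = S.biUnion U ∪ (T \ S).biUnion U := by
    rw [← biUnion_union' U S (T \ S), hT]
  have h2 : (T.biUnion U).card ≤ (S.biUnion U).card + ((T \ S).biUnion U).card := by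
    rw [hbu]; exact card_union_le _ _
  have h4 := Finset.card_biUnion_le (s := T \ S) (t := U)
  have h5 := Finset.card_biUnion_le (s := S) (t := U)
  unfold dupl
  omega

lemma dupl_superadd (U : ι → Finset α) {A B : Finset ι} (h : Disjoint A B) :
    dupl U A + dupl U B ≤ dupl U (A ∪ B) := by
  have h1 : ∑ i ∈ A ∪ B, (U i).card = (∑ i ∈ A, (U i).card) + ∑ i ∈ B, (U i).card :=
    Finset.sum_union h
  have h2 : ((A ∪ B).biUnion U).card ≤ (A.biUnion U).card + (B.biUnion U).card := by
    rw [biUnion_union' U A B]; exact card_union_le _ _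
  have h4 := Finset.card_biUnion_le (s := A) (t := U)
  have h5 := Finset.card_biUnion_le (s := B) (t := U)
  unfold dupl
  omega

lemma dupl_subadd (U : ι → Finset α) {A B : Finset ι} (h : Disjoint A B)
    (h2 : Disjoint (A.biUnion U) (B.biUnion U)) :
    dupl U (A ∪ B) ≤ dupl U A + dupl U B := by
  have h1 : ∑ i ∈ A ∪ B, (U i).card = (∑ i ∈ A, (U i).card) + ∑ i ∈ B, (U i).card :=
    Finset.sum_union h
  have h3 : ((A ∪ B).biUnion U).card = (A.biUnion U).card + (B.biUnion U).card := by
    rw [biUnion_union' U A B]; exact card_union_of_disjoint h2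
  have h4 := Finset.card_biUnion_le (s := A) (t := U)
  have h5 := Finset.card_biUnion_le (s := B) (t := U)
  unfold dupl
  omega

lemma dupl_insert (U : ι → Finset α) {S : Finset ι} {i : ι} (hi : i ∉ S)
    (hne : (U i ∩ S.biUnion U).Nonempty) :
    dupl U S + 1 ≤ dupl U (insert i S) := by
  have h1 : ∑ j ∈ insert i S, (U j).card = (U i).card + ∑ j ∈ S, (U j).card :=
    Finset.sum_insert hi
  have h2 : (insert i S).biUnion U = U i ∪ S.biUnion U := Finset.biUnion_insert
  have h3 := Finset.card_union_add_card_inter (U i) (S.biUnion U)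
  have h4 : 1 ≤ (U i ∩ S.biUnion U).card := card_pos.mpr hne
  have h5 := Finset.card_biUnion_le (s := S) (t := U)
  unfold dupl
  rw [h1, h2]
  omega

lemma cross (r : ι → ι → Prop) (S : Finset ι) {a z : ι} (h : Relation.ReflTransGen r a z)
    (ha : a ∈ S) : z ∉ S → ∃ u ∈ S, ∃ w, w ∉ S ∧ r u w := by
  induction h with
  | refl => intro hz; exact absurd ha hz
  | tail hab hbz ih =>
    rename_i b c
    intro hz
    by_cases hb : b ∈ S
    · exact ⟨b, hb, c, hz, hbz⟩
    · exact ih hb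



lemma greedy {β : Type*} [DecidableEq β] (v π : β → ℕ) (C : Finset β) :
    ∀ (B : ℕ), B < ∑ c ∈ C, v c →
    ∃ J x, J ⊆ C ∧ x ∈ C ∧ x ∉ J ∧ (∑ c ∈ J, v c) ≤ B ∧ B < (∑ c ∈ J, v c) + v x ∧
      (∀ y ∈ C, y ∉ J → π y ≤ π x) ∧ (∀ y ∈ C, y ∉ J → ∀ j ∈ J, π y ≤ π j) := by
  induction C using Finset.strongInduction with
  | _ C ih =>
    intro B hB
    have hC : C.Nonempty := by
      rcases C.eq_empty_or_nonempty with h | h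
      · subst h; simp at hB
      · exact h
    obtain ⟨x₀, hx₀C, hx₀max⟩ := C.exists_max_image π hC
    rcases lt_or_ge B (v x₀) with hlt | hge
    · refine ⟨∅, x₀, empty_subset _, hx₀C, notMem_empty _, by simp, by simpa using hlt,
        fun y hy _ => hx₀max y hy, fun y hy _ j hj => absurd hj (notMem_empty _)⟩
    · have hssub : C.erase x₀ ⊂ C := erase_ssubset hx₀C
      have hsum : (∑ c ∈ C.erase x₀, v c) + v x₀ = ∑ c ∈ C, v c :=
        Finset.sum_erase_add _ _ hx₀C
      obtain ⟨J', x, hJ'sub, hxmem, hxJ', hle, hlt2, hmax1, hmax2⟩ :=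
        ih _ hssub (B - v x₀) (by omega)
      have hx₀J' : x₀ ∉ J' := fun hh => (notMem_erase x₀ C) (hJ'sub hh)
      have hsJ : ∑ c ∈ insert x₀ J', v c = v x₀ + ∑ c ∈ J', v c := Finset.sum_insert hx₀J'
      refine ⟨insert x₀ J', x, ?_, mem_of_mem_erase hxmem, ?_, ?_, ?_, ?_, ?_⟩
      · exact insert_subset hx₀C (hJ'sub.trans (erase_subset _ _))
      · simp only [mem_insert]
        push_neg
        exact ⟨ne_of_mem_erase hxmem, hxJ'⟩
      · omega
      · omega
      · intro y hyC hyJ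
        have hy' : y ∈ C.erase x₀ :=
          mem_erase.mpr ⟨fun he => hyJ (he ▸ mem_insert_self _ _), hyC⟩
        exact hmax1 y hy' (fun hh => hyJ (mem_insert_of_mem hh))
      · intro y hyC hyJ j hj
        have hy' : y ∈ C.erase x₀ :=
          mem_erase.mpr ⟨fun he => hyJ (he ▸ mem_insert_self _ _), hyC⟩
        rcases mem_insert.mp hj with rfl | hj'
        · exact hx₀max y hyC
        · exact hmax2 y hy' (fun hh => hyJ (mem_insert_of_mem hh)) j hj'


end St16

open St16


theorem stmt16 {α : Type*} [DecidableEq α] (t k p ℓ μ a : ℕ)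
    (ht : 2 ≤ t) (hk : 3 ≤ k) (hp : 1 ≤ p) (hℓ1 : 1 ≤ ℓ) (hℓ2 : ℓ ≤ k - 1)
    (hμ : 1 ≤ μ) (hdecomp : k - 1 = μ * ℓ + a) (ha : a < ℓ)
    (U : Fin (t + k) → Finset α) (hcard : ∀ i, (U i).card = p + 1)
    (hunion : ∀ S : Finset (Fin (t + k)), S.card = k →
      k * p + ℓ + 1 ≤ (S.biUnion U).card) :
    μ * (∑ i, (U i).card - (Finset.univ.biUnion U).card) ≤
      (μ - 1) * (t + k - a) + a * μ ^ 2 := by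
  classical
  obtain ⟨μ', rfl⟩ : ∃ μ'', μ = μ'' + 1 := ⟨μ - 1, by omega⟩
  have hkk : k = μ' * ℓ + ℓ + a + 1 := by
    have h0 : (μ' + 1) * ℓ = μ' * ℓ + ℓ := by ring
    omega
  have hkn : k ≤ t + k := by omega
  -- the sharing relation
  set r : Fin (t + k) → Fin (t + k) → Prop := fun i j => (U i ∩ U j).Nonempty with hr
  have hUne : ∀ i, (U i).Nonempty := fun i => card_pos.mp (by rw [hcard i]; omega)
  have hrsymm : Symmetric r := by
    intro i j h
    rw [hr] at h ⊢
    rwa [Finset.inter_comm] at h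
  -- classes
  set cls : Fin (t + k) → Finset (Fin (t + k)) :=
    fun i => univ.filter (fun j => Relation.ReflTransGen r i j) with hclsdef
  have hmem : ∀ i j, j ∈ cls i ↔ Relation.ReflTransGen r i j := by
    intro i j; rw [hclsdef]; simp
  have hself : ∀ i, i ∈ cls i := fun i => (hmem i i).mpr Relation.ReflTransGen.refl
  have hcls_eq : ∀ i j, j ∈ cls i → cls j = cls i := by
    intro i j hj
    have hij : Relation.ReflTransGen r i j := (hmem i j).mp hj
    ext w
    rw [hmem, hmem]
    constructor
    · intro h; exact hij.trans h
    · intro h; exact ((haveI : Std.Symm r := ⟨fun _ _ h => hrsymm h⟩; symm_of (Relation.ReflTransGen r) hij)).trans h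
  have hUdisj : ∀ i j i' : Fin (t + k), j ∉ cls i → i' ∈ cls i →
      ∀ x, x ∈ U i' → x ∈ U j → False := by
    intro i j i' hj hi' x hx1 hx2
    have hrr : r i' j := by rw [hr]; exact ⟨x, mem_inter.mpr ⟨hx1, hx2⟩⟩
    exact hj ((hmem i j).mpr (((hmem i i').mp hi').tail hrr))
  -- components
  set CS : Finset (Finset (Fin (t + k))) := univ.image cls with hCSdef
  have hrep : ∀ C ∈ CS, ∃ i, cls i = C := by
    intro C hC
    obtain ⟨i, _, h⟩ := mem_image.mp (hCSdef ▸ hC)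
    exact ⟨i, h⟩
  have hclsCS : ∀ i, cls i ∈ CS := by
    intro i; rw [hCSdef]; exact mem_image_of_mem cls (mem_univ i)
  have hCdisj : ∀ C ∈ CS, ∀ C' ∈ CS, C ≠ C' → Disjoint C C' := by
    intro C hC C' hC' hne
    obtain ⟨i, rfl⟩ := hrep C hC
    obtain ⟨j, rfl⟩ := hrep C' hC'
    rw [Finset.disjoint_left]
    intro w hw hw'
    exact hne ((hcls_eq i w hw).symm.trans (hcls_eq j w hw'))
  have hEdisj : ∀ C ∈ CS, ∀ C' ∈ CS, C ≠ C' →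
      Disjoint (C.biUnion U) (C'.biUnion U) := by
    intro C hC C' hC' hne
    obtain ⟨i, rfl⟩ := hrep C hC
    obtain ⟨i2, rfl⟩ := hrep C' hC'
    rw [Finset.disjoint_left]
    intro x hx hx'
    obtain ⟨i', hi', hxi'⟩ := mem_biUnion.mp hx
    obtain ⟨j, hj, hxj⟩ := mem_biUnion.mp hx'
    have hjnot : j ∉ cls i := by
      intro hjin
      exact hne ((hcls_eq i j hjin).symm.trans (hcls_eq i2 j hj))
    exact hUdisj i j i' hjnot hi' x hxi' hxj
  have hcover : CS.biUnion (fun C => C) = univ := by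
    ext i
    simp only [mem_biUnion, mem_univ, iff_true]
    exact ⟨cls i, hclsCS i, hself i⟩
  have hvsum : ∑ C ∈ CS, C.card = t + k := by
    rw [← Finset.card_biUnion (fun x hx y hy hxy => hCdisj x hx y hy hxy), hcover,
      card_univ, Fintype.card_fin]
  -- subadditivity over any collection of components
  have hkey_sub : ∀ K : Finset (Finset (Fin (t + k))), K ⊆ CS →
      dupl U (K.biUnion (fun C => C)) ≤ ∑ C ∈ K, dupl U C := by
    intro K
    induction K using Finset.induction_on with
    | empty => intro _; simp [dupl]
    | insert _ _ hCK ih =>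
      rename_i C K
      intro hsub
      have hCin : C ∈ CS := hsub (mem_insert_self _ _)
      have hKsub : K ⊆ CS := fun x hx => hsub (mem_insert_of_mem hx)
      have hd1 : Disjoint C (K.biUnion (fun C => C)) := by
        rw [Finset.disjoint_biUnion_right]
        intro C' hC'
        exact hCdisj C hCin C' (hKsub hC') (fun h => hCK (h ▸ hC'))
      have hd2 : Disjoint (C.biUnion U) ((K.biUnion (fun C => C)).biUnion U) := by
        rw [Finset.biUnion_biUnion]
        rw [Finset.disjoint_biUnion_right]
        intro C' hC'
        exact hEdisj C hCin C' (hKsub hC') (fun h => hCK (h ▸ hC'))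
      have hbU : (insert C K).biUnion (fun C => C) = C ∪ K.biUnion (fun C => C) :=
        Finset.biUnion_insert
      rw [hbU, Finset.sum_insert hCK]
      exact le_trans (dupl_subadd U hd1 hd2) (by exact Nat.add_le_add_left (ih hKsub) _)
  -- superadditivity
  have hkey_sup : ∀ K : Finset (Finset (Fin (t + k))), K ⊆ CS →
      ∑ C ∈ K, dupl U C ≤ dupl U (K.biUnion (fun C => C)) := by
    intro K
    induction K using Finset.induction_on with
    | empty => intro _; simp [dupl]
    | insert _ _ hCK ih =>
      rename_i C K
      intro hsub
      have hCin : C ∈ CS := hsub (mem_insert_self _ _)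
      have hKsub : K ⊆ CS := fun x hx => hsub (mem_insert_of_mem hx)
      have hd1 : Disjoint C (K.biUnion (fun C => C)) := by
        rw [Finset.disjoint_biUnion_right]
        intro C' hC'
        exact hCdisj C hCin C' (hKsub hC') (fun h => hCK (h ▸ hC'))
      have hbU : (insert C K).biUnion (fun C => C) = C ∪ K.biUnion (fun C => C) :=
        Finset.biUnion_insert
      rw [hbU, Finset.sum_insert hCK]
      exact le_trans (by exact Nat.add_le_add_left (ih hKsub) _) (dupl_superadd U hd1)
  have hsub_all : dupl U univ ≤ ∑ C ∈ CS, dupl U C := by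
    have := hkey_sub CS (Finset.Subset.refl CS)
    rwa [hcover] at this
  -- the constraint
  have hcon : ∀ S : Finset (Fin (t + k)), S.card ≤ k → dupl U S + (ℓ + 1) ≤ k := by
    intro S hS
    obtain ⟨T, hST, _, hTcard⟩ :=
      Finset.exists_subsuperset_card_eq (subset_univ S) hS
        (by rw [card_univ, Fintype.card_fin]; omega)
    have h1 := dupl_mono U hST
    have h2 := hunion T hTcard
    have h3 : ∑ i ∈ T, (U i).card = k * (p + 1) := by
      rw [Finset.sum_congr rfl (fun i _ => hcard i), Finset.sum_const, hTcard, smul_eq_mul]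
    have h4 : dupl U T + (ℓ + 1) ≤ k := by
      have h6 := Finset.card_biUnion_le (s := T) (t := U)
      have h5 : k * (p + 1) = k * p + k := by ring
      unfold dupl
      rw [h3]
      omega
    omega
  -- chunk lemma
  have hchunk : ∀ (i₀ : Fin (t + k)) (b : ℕ), b ≤ (cls i₀).card →
      ∃ S, S ⊆ cls i₀ ∧ S.card = b ∧ b ≤ dupl U S + 1 := by
    intro i₀ b
    induction b with
    | zero =>
      intro _
      exact ⟨∅, empty_subset _, card_empty, by omega⟩
    | succ b ihb =>
      intro hb
      obtain ⟨S, hS, hScard, hSdup⟩ := ihb (by omega)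
      rcases Nat.eq_zero_or_pos b with rfl | hbpos
      · exact ⟨{i₀}, singleton_subset_iff.mpr (hself i₀), card_singleton i₀, by omega⟩
      · have hSne : S.Nonempty := card_pos.mp (by omega)
        have hSneC : S ≠ cls i₀ := by
          intro h
          rw [h] at hScard
          omega
        have hss : S ⊂ cls i₀ := Finset.ssubset_iff_subset_ne.mpr ⟨hS, hSneC⟩
        obtain ⟨w₀, hw₀mem, hw₀S⟩ := Finset.exists_of_ssubset hss
        obtain ⟨j, hjS⟩ := hSne
        have hji : Relation.ReflTransGen r i₀ j := (hmem i₀ j).mp (hS hjS)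
        have hiw : Relation.ReflTransGen r i₀ w₀ := (hmem i₀ w₀).mp hw₀mem
        have hjw : Relation.ReflTransGen r j w₀ :=
          ((haveI : Std.Symm r := ⟨fun _ _ h => hrsymm h⟩; symm_of (Relation.ReflTransGen r) hji)).trans hiw
        obtain ⟨u, huS, w, hwS, hruw⟩ := St16.cross r S hjw hjS hw₀S
        have hwC : w ∈ cls i₀ :=
          (hmem i₀ w).mpr (((hmem i₀ u).mp (hS huS)).tail hruw)
        have hruw' : (U u ∩ U w).Nonempty := by rw [hr] at hruw; exact hruw
        obtain ⟨x, hx⟩ := hruw'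
        have hx1 : x ∈ U u := (mem_inter.mp hx).1
        have hx2 : x ∈ U w := (mem_inter.mp hx).2
        have hne : (U w ∩ S.biUnion U).Nonempty :=
          ⟨x, mem_inter.mpr ⟨hx2, mem_biUnion.mpr ⟨u, huS, hx1⟩⟩⟩
        refine ⟨insert w S, insert_subset hwC hS, ?_, ?_⟩
        · rw [card_insert_of_notMem hwS, hScard]
        · have := dupl_insert U hwS hne
          omega
  -- every component has card ≤ dupl + 1
  have hev : ∀ C ∈ CS, C.card ≤ dupl U C + 1 := by
    intro C hC
    obtain ⟨i₀, rfl⟩ := hrep C hC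
    obtain ⟨S, hS, hScard, hSdup⟩ := hchunk i₀ (cls i₀).card le_rfl
    have : S = cls i₀ := Finset.eq_of_subset_of_card_le hS (le_of_eq hScard.symm)
    subst this
    omega
  -- greedy selection
  set π : Finset (Fin (t + k)) → ℕ :=
    fun C => if C.card ≤ dupl U C then (t + k) + 1 else C.card with hπ
  have hBlt : k < ∑ C ∈ CS, C.card := by rw [hvsum]; omega
  obtain ⟨J, x, hJsub, hxCS, hxJ, hVle, hVlt, hπ1, hπ2⟩ :=
    St16.greedy (fun C => C.card) π CS k hBlt
  set VJ := ∑ C ∈ J, C.card with hVJ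
  set EJ := ∑ C ∈ J, dupl U C with hEJ
  set b := k - VJ with hbdef
  have hVJb : VJ + b = k := by omega
  have hblt : b < x.card := by omega
  -- chunk from x
  obtain ⟨i₁, hi₁⟩ := hrep x hxCS
  obtain ⟨Sx, hSxsub, hSxcard, hSxdup⟩ := hchunk i₁ b (by rw [hi₁]; omega)
  rw [hi₁] at hSxsub
  -- the test set
  set Sk := (J.biUnion (fun C => C)) ∪ Sx with hSkdef
  have hdisj1 : Disjoint (J.biUnion (fun C => C)) Sx := by
    rw [Finset.disjoint_biUnion_left]
    intro C hC
    refine Finset.disjoint_of_subset_right hSxsub ?_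
    exact hCdisj C (hJsub hC) x hxCS (fun h => hxJ (h ▸ hC))
  have hcardJ : (J.biUnion (fun C => C)).card = VJ :=
    Finset.card_biUnion (fun c hc d hd hcd => hCdisj _ (hJsub hc) _ (hJsub hd) hcd)
  have hSkcard : Sk.card = k := by
    rw [hSkdef, card_union_of_disjoint hdisj1, hcardJ, hSxcard]
    omega
  have hdupSk : EJ + dupl U Sx ≤ dupl U Sk :=
    le_trans (Nat.add_le_add_right (hkey_sup J hJsub) _) (dupl_superadd U hdisj1)
  have hconSk : dupl U Sk + (ℓ + 1) ≤ k := hcon Sk (le_of_eq hSkcard)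
  have hA : EJ + dupl U Sx + (ℓ + 1) ≤ k := by omega
  have hb1 : b ≤ dupl U Sx + 1 := hSxdup
  -- no unselected component is excess
  have hnox : ∀ y ∈ CS, y ∉ J → ¬ (y.card ≤ dupl U y) := by
    intro y hy hyJ hexc
    have hallJ : ∀ C ∈ J, C.card ≤ dupl U C := by
      intro C hC
      have h1 : π y ≤ π C := hπ2 y hy hyJ C hC
      rw [hπ] at h1
      simp only [if_pos hexc] at h1
      by_contra hnot
      simp only [if_neg hnot] at h1
      have hle : C.card ≤ t + k :=
        le_trans (card_le_card (subset_univ C)) (by rw [card_univ, Fintype.card_fin])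
      omega
    have hVE : VJ ≤ EJ := Finset.sum_le_sum hallJ
    omega
  -- every unselected component is small
  have hsmall : ∀ y ∈ CS, y ∉ J → y.card ≤ μ' + 1 := by
    intro y hy hyJ
    by_contra hbig
    push_neg at hbig
    have hπy : π y = y.card := by
      rw [hπ]; simp only [if_neg (hnox y hy hyJ)]
    set Q := J.filter (fun C => dupl U C < C.card) with hQ
    have hQsub : Q ⊆ J := filter_subset _ _
    have hQv : ∀ C ∈ Q, μ' + 2 ≤ C.card := by
      intro C hC
      have h1 : π y ≤ π C := hπ2 y hy hyJ C (hQsub hC)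
      have hnotex : ¬ (C.card ≤ dupl U C) := by
        have := (mem_filter.mp hC).2; omega
      rw [hπy, hπ] at h1
      simp only [if_neg hnotex] at h1
      omega
    have hpoint : ∀ C ∈ J, C.card ≤ dupl U C + (if dupl U C < C.card then 1 else 0) := by
      intro C hC
      by_cases hc : dupl U C < C.card
      · have := hev C (hJsub hC)
        simp only [if_pos hc]
        omega
      · simp only [if_neg hc]
        omega
    have hVQle : VJ ≤ EJ + Q.card := by
      calc VJ ≤ ∑ C ∈ J, (dupl U C + if dupl U C < C.card then 1 else 0) :=
            Finset.sum_le_sum hpoint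
        _ = EJ + ∑ C ∈ J, (if dupl U C < C.card then 1 else 0) := by
            rw [Finset.sum_add_distrib]
        _ = EJ + Q.card := by rw [hQ, Finset.card_filter]
    have hQvsum : Q.card * (μ' + 2) ≤ ∑ C ∈ Q, C.card := by
      calc Q.card * (μ' + 2) = ∑ _C ∈ Q, (μ' + 2) := by rw [Finset.sum_const, smul_eq_mul]
        _ ≤ ∑ C ∈ Q, C.card := Finset.sum_le_sum hQv
    have hQVJ : ∑ C ∈ Q, C.card ≤ VJ := Finset.sum_le_sum_of_subset hQsub
    rcases Nat.eq_zero_or_pos b with hb0 | hbpos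
    · have hq : ℓ + 1 ≤ Q.card := by omega
      have h2 : (ℓ + 1) * (μ' + 2) ≤ Q.card * (μ' + 2) := Nat.mul_le_mul_right _ hq
      have h3 : (ℓ + 1) * (μ' + 2) = μ' * ℓ + μ' + 2 * ℓ + 2 := by ring
      omega
    · have hq : ℓ ≤ Q.card := by omega
      have h2 : ℓ * (μ' + 2) ≤ Q.card * (μ' + 2) := Nat.mul_le_mul_right _ hq
      have h3 : ℓ * (μ' + 2) = μ' * ℓ + 2 * ℓ := by ring
      omega
  -- arithmetic for the selected part
  have hEV : EJ + ℓ ≤ VJ := by omega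
  have hEm : EJ ≤ μ' * ℓ + a := by omega
  have hselA : (μ' + 1) * EJ ≤ μ' * VJ + a := by
    have k1 : μ' * (EJ + ℓ) ≤ μ' * VJ := Nat.mul_le_mul_left μ' hEV
    have k2 : μ' * (EJ + ℓ) = μ' * EJ + μ' * ℓ := by ring
    have k4 : (μ' + 1) * EJ = μ' * EJ + EJ := by ring
    omega
  -- unselected part
  set B2 := CS \ J with hB2
  set EB := ∑ C ∈ B2, dupl U C with hEB
  set VB := ∑ C ∈ B2, C.card with hVB
  have hunsel : ∀ C ∈ B2, (μ' + 1) * dupl U C + C.card ≤ (μ' + 1) * C.card := by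
    intro C hC
    obtain ⟨hCS', hCJ⟩ := mem_sdiff.mp (hB2 ▸ hC)
    have h1 : dupl U C + 1 ≤ C.card := by
      have := hnox C hCS' hCJ; omega
    have h2 : C.card ≤ μ' + 1 := hsmall C hCS' hCJ
    have h3 : (μ' + 1) * (dupl U C + 1) ≤ (μ' + 1) * C.card := Nat.mul_le_mul_left _ h1
    have h4 : (μ' + 1) * (dupl U C + 1) = (μ' + 1) * dupl U C + μ' + 1 := by ring
    omega
  have hEBb : (μ' + 1) * EB + VB ≤ (μ' + 1) * VB := by
    have h1 : ∑ C ∈ B2, ((μ' + 1) * dupl U C + C.card) ≤ ∑ C ∈ B2, (μ' + 1) * C.card :=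
      Finset.sum_le_sum hunsel
    rw [Finset.sum_add_distrib, ← Finset.mul_sum, ← Finset.mul_sum] at h1
    exact h1
  have hsplitE : EB + EJ = ∑ C ∈ CS, dupl U C := Finset.sum_sdiff hJsub
  have hsplitV : VB + VJ = t + k := by
    rw [hVB, hVJ, hB2, Finset.sum_sdiff hJsub, hvsum]
  -- final combination
  have hgoal0 : (∑ i, (U i).card) - (univ.biUnion U).card = dupl U univ := rfl
  rw [hgoal0]
  simp only [Nat.add_sub_cancel]
  have f1 : dupl U univ ≤ EJ + EB := by omega
  have r1 : (μ' + 1) * dupl U univ ≤ (μ' + 1) * (EJ + EB) := Nat.mul_le_mul_left _ f1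
  have r2 : (μ' + 1) * (EJ + EB) = (μ' + 1) * EJ + (μ' + 1) * EB := by ring
  have r3 : (μ' + 1) * VB = μ' * VB + VB := by ring
  have hTa : a ≤ t + k := by omega
  have g1 : μ' * VJ + μ' * VB = μ' * (t + k - a) + μ' * a := by
    have hsum2 : VJ + VB = (t + k - a) + a := by omega
    calc μ' * VJ + μ' * VB = μ' * (VJ + VB) := by ring
      _ = μ' * ((t + k - a) + a) := by rw [hsum2]
      _ = μ' * (t + k - a) + μ' * a := by ring
  have r4 : μ' * a + a ≤ a * (μ' + 1) ^ 2 := by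
    have h1 : a * (μ' + 1) ≤ a * ((μ' + 1) * (μ' + 1)) :=
      Nat.mul_le_mul_left _ (Nat.le_mul_of_pos_left _ (by omega))
    have h2 : a * (μ' + 1) = μ' * a + a := by ring
    have h3 : a * ((μ' + 1) * (μ' + 1)) = a * (μ' + 1) ^ 2 := by ring
    omega
  omega
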